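/- Let C := Y² + Y − (X³ + X² − 44704·X − 3655907) in ℚ[X,Y], and let F4, F9, F14 be the polynomials defined in the context. Then C divides 64·F4⁷ − 343·F9³ − F14² in ℚ[X,Y]. (Equivalently, in the coordinate ring ℚ[X,Y]/(C) of the elliptic curve y² + y = x³ + x² − 44704x − 3655907 one has the identity 64·F4⁷ − 343·F9³ = F14².) -/
import Mathlib


open MvPolynomial

/-- `X` as an element of `ℚ[X,Y]`. -/
noncomputable def XX : MvPolynomial (Fin 2) ℚ := MvPolynomial.X 0

/-- `Y` as an element of `ℚ[X,Y]`. -/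
noncomputable def YY : MvPolynomial (Fin 2) ℚ := MvPolynomial.X 1

/-- The Weierstrass equation of the elliptic curve `y² + y = x³ + x² − 44704x − 3655907`. -/
noncomputable def Ccurve : MvPolynomial (Fin 2) ℚ :=
  YY ^ 2 + YY - (XX ^ 3 + XX ^ 2 - 44704 * XX - 3655907)

noncomputable def F4 : MvPolynomial (Fin 2) ℚ :=
  XX ^ 2 - 1208 * XX - 227671 + 91 * YY

noncomputable def F9 : MvPolynomial (Fin 2) ℚ :=
  (8 * XX ^ 3 - 384 * XX ^ 2 - 13656232 * XX - 678909344) * YY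
    - (1015 * XX ^ 4 + 770584 * XX ^ 3 + 163098512 * XX ^ 2 + 29785004488 * XX
        + 2319185361392)

noncomputable def F14 : MvPolynomial (Fin 2) ℚ :=
  8 * XX ^ 7 + 400071 * XX ^ 6 - 343453068 * XX ^ 5 - 238003853192 * XX ^ 4
    - 116011622641292 * XX ^ 3 - 15704111899877744 * XX ^ 2
    - 95316727595264672 * XX + 53553894620234333456
    - (8428 * XX ^ 5 + 19974360 * XX ^ 4 + 18880768004 * XX ^ 3 + 4128079708928 * XX ^ 2
        + 335969653582304 * XX + 17681731246686360) * YY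

noncomputable def Qquot : MvPolynomial (Fin 2) ℚ :=
  (-169225839021835763005496215483968) + (3098854636120809292892473696640)*YY^1 + (-1601402849210169750572411584)*YY^2 + (422698902004674549491328)*YY^3 + (-57924044766202963712)*YY^4 + (3307270523886784)*YY^5 + (29337071919463081804561638643200)*XX^1 + (67534157120680857330401276928)*XX^1*YY^1 + (-25146232257540675372023296)*XX^1*YY^2 + (4465750368041175496192)*XX^1*YY^3 + (-307321753296556544)*XX^1*YY^4 + (613745440960703214527970126976)*XX^2 + (586970729860078435133483648)*XX^2*YY^1 + (-116471976926686973411456)*XX^2*YY^2 + (8422938677985197184)*XX^2*YY^3 + (254405424914368)*XX^2*YY^4 + (2666018009512916607840346048)*XX^3 + (2431262864063284857105920)*XX^3*YY^1 + (-86888441159594296768)*XX^3*YY^2 + (-16955702220941120)*XX^3*YY^3 + (-9766402494980190940800192)*XX^4 + (2512185856402976347776)*XX^4*YY^1 + (260471554992434240)*XX^4*YY^2 + (8386992030144)*XX^4*YY^3 + (-96015811143671219925824)*XX^5 + (162502904678070656)*XX^5*YY^1 + (-302269650492992)*XX^5*YY^2 + (-429044969963443056720)*XX^6 + (-3746892594645312)*XX^6*YY^1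 + (153607912640)*XX^6*YY^2 + (-878116879136572544)*XX^7 + (1128711625664)*XX^7*YY^1 + (-1091790857902752)*XX^8 + (1713287744)*XX^8*YY^1 + (-205972323200)*XX^9 + (-175616)*XX^9*YY^1 + (6942320)*XX^10

theorem curve_divides_identity :
    Ccurve ∣ 64 * F4 ^ 7 - 343 * F9 ^ 3 - F14 ^ 2 := by
  refine ⟨Qquot, ?_⟩
  unfold Ccurve F4 F9 F14 Qquot XX YY
  ring
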